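/- arXiv:2102.10851 — 2 statements merged into one kernel-verified Lean document; each statement's English description precedes it below -/
import Mathlib

section
/- For all natural numbers n ≥ λ ≥ 0: φ(n, n−λ, 0) = Σ_{π ∈ 𝒫_{n,λ}} ( Π_{k=1}^{n} π(k)! · ((2k)!)^{π(k)} )^{−1}, as an identity of rational numbers. -/
open Finset

open Finset

/-- Sum over partitions of `n` into `l` even parts `2a` (`a ≥ 1`), weight `1/(∏ mult! (2a)!^mult)`. -/
noncomputable def EE : ℕ → ℕ → ℚ
  | n, 0 => if n = 0 then 1 else 0
  | n, l + 1 => ((l : ℚ) + 1)⁻¹ * ∑ a ∈ range n, ((2 * (n - a)).factorial : ℚ)⁻¹ * EE a l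

/-- Sum over partitions of `2n+k` into `k` odd parts `2b+1` (`b ≥ 1`). -/
noncomputable def OO : ℕ → ℕ → ℚ
  | n, 0 => if n = 0 then 1 else 0
  | n, k + 1 => ((k : ℚ) + 1)⁻¹ * ∑ a ∈ range n, ((2 * (n - a) + 1).factorial : ℚ)⁻¹ * OO a k

noncomputable def AA (n l k : ℕ) : ℚ := ∑ m ∈ range (n + 1), EE m l * OO (n - m) k

lemma EE_zero {n l : ℕ} (h : n < l) : EE n l = 0 := by
  induction l generalizing n with
  | zero => omega
  | succ l ih =>
    rw [EE]
    have : ∀ a ∈ range n, ((2 * (n - a)).factorial : ℚ)⁻¹ * EE a l = 0 := by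
      intro a ha
      rw [ih (by simp at ha; omega), mul_zero]
    rw [Finset.sum_congr rfl this]
    simp

lemma OO_zero {n k : ℕ} (h : n < k) : OO n k = 0 := by
  induction k generalizing n with
  | zero => omega
  | succ k ih =>
    rw [OO]
    have : ∀ a ∈ range n, ((2 * (n - a) + 1).factorial : ℚ)⁻¹ * OO a k = 0 := by
      intro a ha
      rw [ih (by simp at ha; omega), mul_zero]
    rw [Finset.sum_congr rfl this]
    simp

lemma AA_zero {n l k : ℕ} (h : n < l + k) : AA n l k = 0 := by
  rw [AA]
  apply Finset.sum_eq_zero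
  intro m hm
  simp only [mem_range] at hm
  rcases lt_or_ge m l with h1 | h1
  · rw [EE_zero h1, zero_mul]
  · rw [OO_zero (by omega), mul_zero]

lemma double_reindex (n : ℕ) (F G : ℕ → ℕ → ℚ)
    (h : ∀ a c, c < a → a < n → F a c = G (n - a + c) c) :
    ∑ a ∈ range n, ∑ c ∈ range a, F a c = ∑ c ∈ range n, ∑ a ∈ range c, G c a := by
  rw [Finset.sum_sigma', Finset.sum_sigma']
  refine Finset.sum_nbij' (fun p => ⟨n - p.1 + p.2, p.2⟩) (fun q => ⟨n - q.1 + q.2, q.2⟩)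
    ?_ ?_ ?_ ?_ ?_
  · rintro ⟨a, c⟩ hp
    simp only [Finset.mem_sigma, Finset.mem_range] at hp ⊢
    omega
  · rintro ⟨c, a⟩ hq
    simp only [Finset.mem_sigma, Finset.mem_range] at hq ⊢
    omega
  · rintro ⟨a, c⟩ hp
    simp only [Finset.mem_sigma, Finset.mem_range] at hp
    show (⟨n - (n - a + c) + c, c⟩ : (_ : ℕ) × ℕ) = ⟨a, c⟩
    rw [show n - (n - a + c) + c = a by omega]
  · rintro ⟨c, a⟩ hq
    simp only [Finset.mem_sigma, Finset.mem_range] at hq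
    show (⟨n - (n - c + a) + a, a⟩ : (_ : ℕ) × ℕ) = ⟨c, a⟩
    rw [show n - (n - c + a) + a = c by omega]
  · rintro ⟨a, c⟩ hp
    simp only [Finset.mem_sigma, Finset.mem_range] at hp
    exact h a c hp.2 hp.1

lemma inv_fact_mul (v : ℕ) :
    (((v + 1 : ℕ)) : ℚ) * (((v + 1).factorial : ℕ) : ℚ)⁻¹ = ((v.factorial : ℕ) : ℚ)⁻¹ := by
  rw [Nat.factorial_succ]
  push_cast
  rw [mul_inv, ← mul_assoc, mul_inv_cancel₀ (by positivity), one_mul]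

lemma EE_succ_mul (l n : ℕ) :
    ((l : ℚ) + 1) * EE n (l + 1) = ∑ a ∈ range n, ((2 * (n - a)).factorial : ℚ)⁻¹ * EE a l := by
  rw [EE, ← mul_assoc, mul_inv_cancel₀ (by positivity), one_mul]

lemma OO_succ_mul (k n : ℕ) :
    ((k : ℚ) + 1) * OO n (k + 1)
      = ∑ a ∈ range n, ((2 * (n - a) + 1).factorial : ℚ)⁻¹ * OO a k := by
  rw [OO, ← mul_assoc, mul_inv_cancel₀ (by positivity), one_mul]

lemma EE_mul_self (l n : ℕ) :
    (l : ℚ) * EE n l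
      = if l = 0 then 0
        else ∑ a ∈ range n, ((2 * (n - a)).factorial : ℚ)⁻¹ * EE a (l - 1) := by
  cases l with
  | zero => simp
  | succ l => rw [if_neg (Nat.succ_ne_zero l)]; push_cast; exact EE_succ_mul l n

lemma OO_mul_self (k n : ℕ) :
    (k : ℚ) * OO n k
      = if k = 0 then 0
        else ∑ a ∈ range n, ((2 * (n - a) + 1).factorial : ℚ)⁻¹ * OO a (k - 1) := by
  cases k with
  | zero => simp
  | succ k => rw [if_neg (Nat.succ_ne_zero k)]; push_cast; exact OO_succ_mul k n

lemma EE_R1 : ∀ l n : ℕ, (2 * (n : ℚ)) * EE n l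
    = if l = 0 then 0
      else ∑ c ∈ range n, ((2 * (n - 1 - c) + 1).factorial : ℚ)⁻¹ * EE c (l - 1) := by
  intro l
  induction l with
  | zero => intro n; rcases n with _ | n <;> simp [EE]
  | succ l ih =>
    intro n
    rw [if_neg (Nat.succ_ne_zero l)]
    have h1 : ((l : ℚ) + 1) ≠ 0 := by positivity
    apply mul_left_cancel₀ h1
    simp only [Nat.add_sub_cancel]
    rw [mul_left_comm, EE_succ_mul, Finset.mul_sum, Finset.mul_sum]
    have LHS : ∀ a ∈ range n,
        (2 * (n : ℚ)) * (((2 * (n - a)).factorial : ℚ)⁻¹ * EE a l)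
          = ((2 * (n - 1 - a) + 1).factorial : ℚ)⁻¹ * EE a l
            + ((2 * (n - a)).factorial : ℚ)⁻¹ * ((2 * (a : ℚ)) * EE a l) := by
      intro a ha
      simp only [mem_range] at ha
      have hv : 2 * (n - a) = (2 * (n - 1 - a) + 1) + 1 := by omega
      have hc : (2 * (n : ℚ)) = (((2 * (n - 1 - a) + 1) + 1 : ℕ) : ℚ) + 2 * (a : ℚ) := by
        push_cast
        have : ((n - 1 - a : ℕ) : ℚ) = (n : ℚ) - 1 - (a : ℚ) := by
          have : ((n - 1 - a : ℕ) : ℚ) = ((n : ℕ) : ℚ) - ((1 + a : ℕ) : ℚ) := by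
            rw [← Nat.cast_sub (by omega)]; congr 1; omega
          push_cast at this; linarith
        rw [this]; ring
      rw [hv, hc, add_mul, ← mul_assoc, inv_fact_mul (2 * (n - 1 - a) + 1)]
      ring
    rw [Finset.sum_congr rfl LHS]
    have RHS : ∀ c ∈ range n,
        ((l : ℚ) + 1) * (((2 * (n - 1 - c) + 1).factorial : ℚ)⁻¹ * EE c l)
          = ((2 * (n - 1 - c) + 1).factorial : ℚ)⁻¹ * EE c l
            + ((2 * (n - 1 - c) + 1).factorial : ℚ)⁻¹ * ((l : ℚ) * EE c l) := by
      intro c hc; ring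
    rw [Finset.sum_congr rfl RHS, Finset.sum_add_distrib, Finset.sum_add_distrib]
    congr 1
    by_cases hl : l = 0
    · subst hl
      simp [ih]
    · have ihs : ∀ a : ℕ, (2 * (a : ℚ)) * EE a l
          = ∑ c ∈ range a, ((2 * (a - 1 - c) + 1).factorial : ℚ)⁻¹ * EE c (l - 1) := by
        intro a; rw [ih a, if_neg hl]
      have hms : ∀ c : ℕ, (l : ℚ) * EE c l
          = ∑ a ∈ range c, ((2 * (c - a)).factorial : ℚ)⁻¹ * EE a (l - 1) := by
        intro c; rw [EE_mul_self, if_neg hl]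
      simp only [ihs, hms, Finset.mul_sum]
      refine double_reindex n _ _ ?_
      intro a c hca han
      rw [show n - 1 - (n - a + c) = a - 1 - c by omega,
        show n - a + c - c = n - a by omega]
      ring

lemma OO_R3 : ∀ k n : ℕ, (2 * (n : ℚ) + (k : ℚ)) * OO n k
    = if k = 0 then 0
      else ∑ c ∈ range n, ((2 * (n - c)).factorial : ℚ)⁻¹ * OO c (k - 1) := by
  intro k
  induction k with
  | zero => intro n; rcases n with _ | n <;> simp [OO]
  | succ k ih =>
    intro n
    rw [if_neg (Nat.succ_ne_zero k)]
    have h1 : ((k : ℚ) + 1) ≠ 0 := by positivity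
    apply mul_left_cancel₀ h1
    simp only [Nat.add_sub_cancel]
    push_cast
    rw [mul_left_comm, OO_succ_mul, Finset.mul_sum, Finset.mul_sum]
    have LHS : ∀ a ∈ range n,
        (2 * (n : ℚ) + ((k : ℚ) + 1)) * (((2 * (n - a) + 1).factorial : ℚ)⁻¹ * OO a k)
          = ((2 * (n - a)).factorial : ℚ)⁻¹ * OO a k
            + ((2 * (n - a) + 1).factorial : ℚ)⁻¹ * ((2 * (a : ℚ) + (k : ℚ)) * OO a k) := by
      intro a ha
      simp only [mem_range] at ha
      have hc : (2 * (n : ℚ) + ((k : ℚ) + 1))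
          = (((2 * (n - a)) + 1 : ℕ) : ℚ) + (2 * (a : ℚ) + (k : ℚ)) := by
        push_cast
        have : ((n - a : ℕ) : ℚ) = (n : ℚ) - (a : ℚ) := by
          rw [Nat.cast_sub (by omega)]
        rw [this]; ring
      rw [hc, add_mul, ← mul_assoc, inv_fact_mul (2 * (n - a))]
      ring
    rw [Finset.sum_congr rfl LHS]
    have RHS : ∀ c ∈ range n,
        ((k : ℚ) + 1) * (((2 * (n - c)).factorial : ℚ)⁻¹ * OO c k)
          = ((2 * (n - c)).factorial : ℚ)⁻¹ * OO c k
            + ((2 * (n - c)).factorial : ℚ)⁻¹ * ((k : ℚ) * OO c k) := by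
      intro c hc; ring
    rw [Finset.sum_congr rfl RHS, Finset.sum_add_distrib, Finset.sum_add_distrib]
    congr 1
    by_cases hk : k = 0
    · subst hk
      have h0 : ∀ a : ℕ, (2 * (a : ℚ)) * OO a 0 = 0 := by
        intro a; have := ih a; simpa using this
      refine Eq.trans (Finset.sum_eq_zero fun a ha => ?_) (Finset.sum_eq_zero fun a ha => ?_).symm
      · rw [show ((0:ℕ):ℚ) = 0 by norm_cast, add_zero, h0, mul_zero]
      · rw [show ((0:ℕ):ℚ) = 0 by norm_cast, zero_mul, mul_zero]
    · have ihs : ∀ a : ℕ, (2 * (a : ℚ) + (k : ℚ)) * OO a k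
          = ∑ c ∈ range a, ((2 * (a - c)).factorial : ℚ)⁻¹ * OO c (k - 1) := by
        intro a; rw [ih a, if_neg hk]
      have hms : ∀ c : ℕ, (k : ℚ) * OO c k
          = ∑ a ∈ range c, ((2 * (c - a) + 1).factorial : ℚ)⁻¹ * OO a (k - 1) := by
        intro c; rw [OO_mul_self, if_neg hk]
      simp only [ihs, hms, Finset.mul_sum]
      refine double_reindex n _ _ ?_
      intro a c hca han
      rw [show n - (n - a + c) = a - c by omega,
        show n - a + c - c = n - a by omega]
      ring

lemma double_reindex2 (n : ℕ) (F G : ℕ → ℕ → ℚ)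
    (h : ∀ m c, m + c ≤ n → F m c = G (n + 1 - c) m) :
    ∑ m ∈ range (n + 2), ∑ c ∈ range (n + 1 - m), F m c
      = ∑ m ∈ range (n + 2), ∑ a ∈ range m, G m a := by
  rw [Finset.sum_sigma', Finset.sum_sigma']
  refine Finset.sum_nbij' (fun p => ⟨n + 1 - p.2, p.1⟩) (fun q => ⟨q.2, n + 1 - q.1⟩)
    ?_ ?_ ?_ ?_ ?_
  · rintro ⟨m, c⟩ hp
    simp only [Finset.mem_sigma, Finset.mem_range] at hp ⊢
    omega
  · rintro ⟨m, a⟩ hq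
    simp only [Finset.mem_sigma, Finset.mem_range] at hq ⊢
    omega
  · rintro ⟨m, c⟩ hp
    simp only [Finset.mem_sigma, Finset.mem_range] at hp
    show (⟨m, n + 1 - (n + 1 - c)⟩ : (_ : ℕ) × ℕ) = ⟨m, c⟩
    rw [show n + 1 - (n + 1 - c) = c by omega]
  · rintro ⟨m, a⟩ hq
    simp only [Finset.mem_sigma, Finset.mem_range] at hq
    show (⟨n + 1 - (n + 1 - m), a⟩ : (_ : ℕ) × ℕ) = ⟨m, a⟩
    rw [show n + 1 - (n + 1 - m) = m by omega]
  · rintro ⟨m, c⟩ hp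
    simp only [Finset.mem_sigma, Finset.mem_range] at hp
    exact h m c (by omega)

lemma double_reindex3 (n : ℕ) (F G : ℕ → ℕ → ℚ)
    (h : ∀ m c, c < m → m ≤ n + 1 → F m c = G c (n + 1 - m)) :
    ∑ m ∈ range (n + 2), ∑ c ∈ range m, F m c
      = ∑ m ∈ range (n + 1), ∑ b ∈ range (n - m + 1), G m b := by
  rw [Finset.sum_sigma', Finset.sum_sigma']
  refine Finset.sum_nbij' (fun p => ⟨p.2, n + 1 - p.1⟩) (fun q => ⟨n + 1 - q.2, q.1⟩)
    ?_ ?_ ?_ ?_ ?_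
  · rintro ⟨m, c⟩ hp
    simp only [Finset.mem_sigma, Finset.mem_range] at hp ⊢
    omega
  · rintro ⟨m, b⟩ hq
    simp only [Finset.mem_sigma, Finset.mem_range] at hq ⊢
    omega
  · rintro ⟨m, c⟩ hp
    simp only [Finset.mem_sigma, Finset.mem_range] at hp
    show (⟨n + 1 - (n + 1 - m), c⟩ : (_ : ℕ) × ℕ) = ⟨m, c⟩
    rw [show n + 1 - (n + 1 - m) = m by omega]
  · rintro ⟨m, b⟩ hq
    simp only [Finset.mem_sigma, Finset.mem_range] at hq
    show (⟨m, n + 1 - (n + 1 - b)⟩ : (_ : ℕ) × ℕ) = ⟨m, b⟩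
    rw [show n + 1 - (n + 1 - b) = b by omega]
  · rintro ⟨m, c⟩ hp
    simp only [Finset.mem_sigma, Finset.mem_range] at hp
    exact h m c hp.2 (by omega)
section
open Finset
lemma AA_rec (n l k : ℕ) :
    (2 * ((n : ℚ) + 1) + (k : ℚ)) * AA (n + 1) l k
      = (if k = 0 then 0 else ((l : ℚ) + 1) * AA (n + 1) (l + 1) (k - 1))
        + (if l = 0 then 0 else ((k : ℚ) + 1) * AA n (l - 1) (k + 1) + AA n (l - 1) k) := by
  have split : (2 * ((n : ℚ) + 1) + (k : ℚ)) * AA (n + 1) l k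
      = (∑ m ∈ range (n + 2), EE m l * ((2 * ((n + 1 - m : ℕ) : ℚ) + (k : ℚ)) * OO (n + 1 - m) k))
        + ∑ m ∈ range (n + 2), ((2 * (m : ℚ)) * EE m l) * OO (n + 1 - m) k := by
    rw [AA, Finset.mul_sum, ← Finset.sum_add_distrib]
    refine Finset.sum_congr rfl fun m hm => ?_
    simp only [mem_range] at hm
    have hcast : ((n + 1 - m : ℕ) : ℚ) = (n : ℚ) + 1 - (m : ℚ) := by
      rw [Nat.cast_sub (by omega)]; push_cast; ring
    rw [hcast]; ring
  rw [split]
  congr 1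
  -- Goal A : even-part derivative term
  · have step : ∀ m ∈ range (n + 2),
        EE m l * ((2 * ((n + 1 - m : ℕ) : ℚ) + (k : ℚ)) * OO (n + 1 - m) k)
          = EE m l * (if k = 0 then 0
              else ∑ c ∈ range (n + 1 - m), ((2 * (n + 1 - m - c)).factorial : ℚ)⁻¹ * OO c (k - 1)) := by
      intro m hm
      rw [OO_R3]
    rw [Finset.sum_congr rfl step]
    by_cases hk : k = 0
    · simp [hk]
    · simp only [if_neg hk]
      rw [AA, Finset.mul_sum]
      have rstep : ∀ m ∈ range (n + 2),
          ((l : ℚ) + 1) * (EE m (l + 1) * OO (n + 1 - m) (k - 1))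
            = ∑ a ∈ range m, ((2 * (m - a)).factorial : ℚ)⁻¹ * EE a l * OO (n + 1 - m) (k - 1) := by
        intro m hm
        rw [← mul_assoc, EE_succ_mul, Finset.sum_mul]
      rw [Finset.sum_congr rfl rstep]
      simp only [mul_ite, mul_zero, Finset.mul_sum]
      refine double_reindex2 n _ _ ?_
      intro m c hmc
      rw [show n + 1 - c - m = n + 1 - m - c by omega, show n + 1 - (n + 1 - c) = c by omega]
      ring
  -- Goal B : odd-part derivative term
  · have step : ∀ m ∈ range (n + 2),
        ((2 * (m : ℚ)) * EE m l) * OO (n + 1 - m) k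
          = (if l = 0 then 0
              else ∑ c ∈ range m, ((2 * (m - 1 - c) + 1).factorial : ℚ)⁻¹ * EE c (l - 1))
              * OO (n + 1 - m) k := by
      intro m hm
      rw [EE_R1]
    rw [Finset.sum_congr rfl step]
    by_cases hl : l = 0
    · simp [hl]
    · simp only [if_neg hl]
      have rhs2 : ((k : ℚ) + 1) * AA n (l - 1) (k + 1) + AA n (l - 1) k
          = ∑ m ∈ range (n + 1), ∑ b ∈ range (n - m + 1),
              EE m (l - 1) * (((2 * (n - m - b) + 1).factorial : ℚ)⁻¹ * OO b k) := by
        rw [AA, AA, Finset.mul_sum, ← Finset.sum_add_distrib]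
        refine Finset.sum_congr rfl fun m hm => ?_
        simp only [mem_range] at hm
        rw [Finset.sum_range_succ, show n - m - (n - m) = 0 by omega]
        simp only [mul_zero, zero_add, Nat.factorial_one, Nat.cast_one, inv_one, one_mul]
        rw [mul_left_comm, OO_succ_mul, Finset.mul_sum]
      rw [rhs2]
      simp only [Finset.sum_mul]
      refine double_reindex3 n _ _ ?_
      intro m c hcm hmn
      rw [show n - c - (n + 1 - m) = m - 1 - c by omega]
      ring
end

/-- Auxiliary array realizing the triangular field `φ` on natural-number indices. -/
def phiN : ℕ → ℕ → ℕ → ℚ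
  | 0, j, k => if j = 0 ∧ k = 0 then 1 else 0
  | n + 1, j, k =>
    if k ≤ j ∧ j ≤ n + 1 then
      ((if _hk : k = 0 then 0 else ((n : ℚ) + 2 - (j : ℚ)) * phiN (n + 1) (j - 1) (k - 1))
        + ((k : ℚ) + 1) * phiN n j (k + 1) + phiN n j k) / (2 * ((n : ℚ) + 1) + (k : ℚ))
    else 0
termination_by n j k => (n, j)

/-- The triangular field `φ(n,j,k)` of rational numbers: `φ(n,j,k) = 0` unless
`0 ≤ k ≤ j ≤ n`, `φ(0,0,0) = 1`, and for `0 ≤ k ≤ j ≤ n` with `(n,j,k) ≠ (0,0,0)`,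
`(2n+k)·φ(n,j,k) = (n-j+1)·φ(n,j-1,k-1) + (k+1)·φ(n-1,j,k+1) + φ(n-1,j,k)`. -/
def phi (n j k : ℤ) : ℚ :=
  if 0 ≤ n ∧ 0 ≤ j ∧ 0 ≤ k then phiN n.toNat j.toNat k.toNat else 0

section
open Finset

lemma AA_k0 (n l : ℕ) : AA n l 0 = EE n l := by
  rw [AA]
  rw [Finset.sum_eq_single n]
  · rw [Nat.sub_self, OO, if_pos rfl, mul_one]
  · intro m hm hmn
    simp only [mem_range] at hm
    rw [OO, if_neg (by omega), mul_zero]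
  · intro h
    exact absurd (Finset.self_mem_range_succ n) h

lemma phiN_eq (n j k : ℕ) :
    phiN n j k = if k ≤ j ∧ j ≤ n then AA n (n - j) k else 0 := by
  induction n, j, k using phiN.induct with
  | case1 j k h =>
    obtain ⟨rfl, rfl⟩ := h
    rw [phiN, if_pos ⟨rfl, rfl⟩, if_pos ⟨le_refl 0, le_refl 0⟩]
    simp [AA, EE, OO]
  | case2 j k h =>
    rw [phiN, if_neg h, eq_comm, if_neg]
    rintro ⟨h1, h2⟩
    exact h ⟨by omega, by omega⟩
  | case3 n j k hcond ih1 ih2 ih3 =>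
    rw [phiN, if_pos hcond, if_pos (by exact hcond)]
    obtain ⟨hkj, hjn⟩ := hcond
    have hden : (2 * ((n : ℚ) + 1) + (k : ℚ)) ≠ 0 := by positivity
    rw [div_eq_iff hden]
    rw [mul_comm (AA (n + 1) (n + 1 - j) k), AA_rec n (n + 1 - j) k, add_assoc]
    congr 1
    · -- dite term = if k = 0 then 0 else (l+1) * AA (n+1) (l+1) (k-1)
      by_cases hk : k = 0
      · rw [dif_pos hk, if_pos hk]
      · rw [dif_neg hk, if_neg hk, ih1 hk]
        rw [if_pos ⟨by omega, by omega⟩]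
        rw [show n + 1 - (j - 1) = (n + 1 - j) + 1 by omega]
        congr 1
        rw [show ((n + 1 - j : ℕ) : ℚ) = (n : ℚ) + 1 - (j : ℚ) by
          rw [Nat.cast_sub (by omega)]; push_cast; ring]
        ring
    · -- remaining two terms
      rw [ih2, ih3]
      by_cases hj : j = n + 1
      · subst hj
        rw [if_neg (show ¬(k + 1 ≤ n + 1 ∧ n + 1 ≤ n) by omega),
            if_neg (show ¬(k ≤ n + 1 ∧ n + 1 ≤ n) by omega),
            if_pos (show n + 1 - (n + 1) = 0 by omega)]
        ring
      · have hjn' : j ≤ n := by omega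
        rw [if_pos (show k ≤ j ∧ j ≤ n from ⟨hkj, hjn'⟩),
            if_neg (show ¬(n + 1 - j = 0) by omega),
            show n + 1 - j - 1 = n - j by omega]
        by_cases hk1 : k + 1 ≤ j
        · rw [if_pos (show k + 1 ≤ j ∧ j ≤ n from ⟨hk1, hjn'⟩)]
        · rw [if_neg (show ¬(k + 1 ≤ j ∧ j ≤ n) from fun hc => hk1 hc.1),
              AA_zero (show n < (n - j) + (k + 1) by omega), mul_zero, zero_add]
  | case4 n j k h =>
    rw [phiN, if_neg h, eq_comm, if_neg]
    rintro ⟨h1, h2⟩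
    exact h ⟨h1, by omega⟩
end
section
open Finset

/-- The weight of a partition. -/
noncomputable def wgt (n : ℕ) (π : Nat.Partition n) : ℚ :=
  (∏ k ∈ Finset.Icc 1 n,
    (Nat.factorial (Multiset.count k π.parts) : ℚ)
      * (Nat.factorial (2 * k) : ℚ) ^ (Multiset.count k π.parts))⁻¹

noncomputable def S (n l : ℕ) : ℚ :=
  ∑ π ∈ Finset.univ.filter (fun π : Nat.Partition n => Multiset.card π.parts = l), wgt n π

lemma part_le {n : ℕ} (π : Nat.Partition n) {p : ℕ} (h : p ∈ π.parts) : p ≤ n := by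
  have := Multiset.single_le_sum (fun x _ => Nat.zero_le x) p h
  rwa [π.parts_sum] at this

lemma part_mem_Icc {n : ℕ} (π : Nat.Partition n) {p : ℕ} (h : p ∈ π.parts) :
    p ∈ Finset.Icc 1 n :=
  Finset.mem_Icc.mpr ⟨π.parts_pos h, part_le π h⟩

lemma count_eq_zero_of_gt {m : ℕ} (π : Nat.Partition m) {k : ℕ} (h : m < k) :
    Multiset.count k π.parts = 0 := by
  rw [Multiset.count_eq_zero]
  intro hk
  exact absurd (part_le π hk) (by omega)

lemma card_parts_eq_sum {n : ℕ} (π : Nat.Partition n) :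
    Multiset.card π.parts = ∑ p ∈ Finset.Icc 1 n, Multiset.count p π.parts := by
  rw [← Multiset.toFinset_sum_count_eq π.parts]
  exact Finset.sum_subset (fun p hp => part_mem_Icc π (Multiset.mem_toFinset.mp hp))
    (fun p _ hnp => Multiset.count_eq_zero.mpr (fun hmem => hnp (Multiset.mem_toFinset.mpr hmem)))

/-- Erase one part `p` from a partition of `n`, giving a partition of `n - p`. -/
def eraseP {n : ℕ} (p : ℕ) (π : Nat.Partition n) (hmem : p ∈ π.parts) :
    Nat.Partition (n - p) where
  parts := π.parts.erase p
  parts_pos := fun hq => π.parts_pos (Multiset.mem_of_mem_erase hq)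
  parts_sum := by
    have h1 : p ::ₘ π.parts.erase p = π.parts := Multiset.cons_erase hmem
    have h2 : p + (π.parts.erase p).sum = π.parts.sum := by
      rw [← Multiset.sum_cons, h1]
    have h3 := π.parts_sum
    omega

def consP {n : ℕ} (p : ℕ) (hp1 : 1 ≤ p) (hpn : p ≤ n) (π : Nat.Partition (n - p)) :
    Nat.Partition n where
  parts := p ::ₘ π.parts
  parts_pos := fun hq => by
    rcases Multiset.mem_cons.mp hq with rfl | hq'
    · exact hp1
    · exact π.parts_pos hq'
  parts_sum := by rw [Multiset.sum_cons, π.parts_sum]; omega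

lemma wprod_pos {m n : ℕ} (π : Nat.Partition m) :
    0 < ∏ k ∈ Finset.Icc 1 n,
      (Nat.factorial (Multiset.count k π.parts) : ℚ)
        * (Nat.factorial (2 * k) : ℚ) ^ (Multiset.count k π.parts) := by
  apply Finset.prod_pos
  intro k _
  positivity

lemma wprod_extend {m n : ℕ} (hmn : m ≤ n) (π : Nat.Partition m) :
    (∏ k ∈ Finset.Icc 1 n,
      (Nat.factorial (Multiset.count k π.parts) : ℚ)
        * (Nat.factorial (2 * k) : ℚ) ^ (Multiset.count k π.parts))
      = ∏ k ∈ Finset.Icc 1 m,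
          (Nat.factorial (Multiset.count k π.parts) : ℚ)
            * (Nat.factorial (2 * k) : ℚ) ^ (Multiset.count k π.parts) := by
  symm
  apply Finset.prod_subset (Finset.Icc_subset_Icc le_rfl hmn)
  intro k hk hnk
  have h0 : Multiset.count k π.parts = 0 := by
    apply count_eq_zero_of_gt
    simp only [Finset.mem_Icc] at hk hnk
    omega
  simp [h0]

lemma wgt_erase {n p : ℕ} (hpn : p ≤ n) (π : Nat.Partition n) (hmem : p ∈ π.parts) :
    (Multiset.count p π.parts : ℚ) * wgt n π
      = ((2 * p).factorial : ℚ)⁻¹ * wgt (n - p) (eraseP p π hmem) := by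
  have hpIcc : p ∈ Finset.Icc 1 n := part_mem_Icc π hmem
  set c := Multiset.count p π.parts with hc
  have hc0 : 0 < c := Multiset.count_pos.mpr hmem
  have hcount_erase : ∀ k ∈ (Finset.Icc 1 n).erase p,
      Multiset.count k (π.parts.erase p) = Multiset.count k π.parts := by
    intro k hk
    exact Multiset.count_erase_of_ne (Finset.ne_of_mem_erase hk) _
  -- the two products over Icc 1 n
  have hP : ∏ k ∈ Finset.Icc 1 n,
        (Nat.factorial (Multiset.count k π.parts) : ℚ)
          * (Nat.factorial (2 * k) : ℚ) ^ (Multiset.count k π.parts)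
      = ((c : ℚ) * ((2 * p).factorial : ℚ))
        * ∏ k ∈ Finset.Icc 1 n,
            (Nat.factorial (Multiset.count k (π.parts.erase p)) : ℚ)
              * (Nat.factorial (2 * k) : ℚ) ^ (Multiset.count k (π.parts.erase p)) := by
    have hprods : ∏ k ∈ (Finset.Icc 1 n).erase p,
            (Nat.factorial (Multiset.count k (π.parts.erase p)) : ℚ)
              * (Nat.factorial (2 * k) : ℚ) ^ (Multiset.count k (π.parts.erase p))
          = ∏ k ∈ (Finset.Icc 1 n).erase p,
              (Nat.factorial (Multiset.count k π.parts) : ℚ)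
                * (Nat.factorial (2 * k) : ℚ) ^ (Multiset.count k π.parts) :=
      Finset.prod_congr rfl (fun k hk => by rw [hcount_erase k hk])
    rw [← Finset.mul_prod_erase _ _ hpIcc, ← Finset.mul_prod_erase _ _ hpIcc, hprods]
    have hce : Multiset.count p (π.parts.erase p) = c - 1 := by
      rw [Multiset.count_erase_self]
    rw [hce]
    have hfac : (Nat.factorial c : ℚ) = (c : ℚ) * (Nat.factorial (c - 1) : ℚ) := by
      rw [show c = (c - 1) + 1 by omega, Nat.factorial_succ]
      push_cast
      ring
    have hpow : ((Nat.factorial (2 * p) : ℚ)) ^ c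
        = ((Nat.factorial (2 * p) : ℚ)) ^ (c - 1) * (Nat.factorial (2 * p) : ℚ) := by
      rw [← pow_succ, show c - 1 + 1 = c by omega]
    rw [hfac, hpow]
    ring
  have hPe : wgt (n - p) (eraseP p π hmem)
      = (∏ k ∈ Finset.Icc 1 n,
          (Nat.factorial (Multiset.count k (π.parts.erase p)) : ℚ)
            * (Nat.factorial (2 * k) : ℚ) ^ (Multiset.count k (π.parts.erase p)))⁻¹ := by
    rw [wgt]
    congr 1
    exact (wprod_extend (Nat.sub_le n p) (eraseP p π hmem)).symm
  rw [wgt, hP, hPe, mul_inv, mul_inv]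
  have hQpos := wprod_pos (n := n) (eraseP p π hmem)
  have hQne : (∏ k ∈ Finset.Icc 1 n,
      (Nat.factorial (Multiset.count k (π.parts.erase p)) : ℚ)
        * (Nat.factorial (2 * k) : ℚ) ^ (Multiset.count k (π.parts.erase p))) ≠ 0 := by
    have := hQpos
    simp only [eraseP] at this
    exact ne_of_gt this
  have hcne : (c : ℚ) ≠ 0 := by positivity
  field_simp

lemma key_lemma (n l p : ℕ) (hp1 : 1 ≤ p) (hpn : p ≤ n) :
    ∑ π ∈ Finset.univ.filter (fun π : Nat.Partition n => Multiset.card π.parts = l + 1),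
        (Multiset.count p π.parts : ℚ) * wgt n π
      = ((2 * p).factorial : ℚ)⁻¹ * S (n - p) l := by
  rw [S, Finset.mul_sum]
  have hsub : Finset.univ.filter
        (fun π : Nat.Partition n => Multiset.card π.parts = l + 1 ∧ p ∈ π.parts)
      ⊆ Finset.univ.filter (fun π : Nat.Partition n => Multiset.card π.parts = l + 1) := by
    intro π hπ
    simp only [Finset.mem_filter] at hπ ⊢
    exact ⟨hπ.1, hπ.2.1⟩
  rw [← Finset.sum_subset hsub (fun π hπ hπn => by
    simp only [Finset.mem_filter, Finset.mem_univ, true_and] at hπ hπn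
    have hnm : p ∉ π.parts := fun hmem => hπn ⟨hπ, hmem⟩
    rw [Multiset.count_eq_zero.mpr hnm, Nat.cast_zero, zero_mul])]
  refine Finset.sum_bij'
    (fun π hπ => eraseP p π (by
      simp only [Finset.mem_filter, Finset.mem_univ, true_and] at hπ
      exact hπ.2))
    (fun π' _ => consP p hp1 hpn π') ?_ ?_ ?_ ?_ ?_
  · intro π hπ
    simp only [Finset.mem_filter, Finset.mem_univ, true_and] at hπ ⊢
    show Multiset.card (π.parts.erase p) = l
    rw [Multiset.card_erase_of_mem hπ.2, hπ.1]
    rfl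
  · intro π' hπ'
    simp only [Finset.mem_filter, Finset.mem_univ, true_and] at hπ' ⊢
    constructor
    · show Multiset.card (p ::ₘ π'.parts) = l + 1
      rw [Multiset.card_cons, hπ']
    · exact Multiset.mem_cons_self p π'.parts
  · intro π hπ
    simp only [Finset.mem_filter, Finset.mem_univ, true_and] at hπ
    apply Nat.Partition.ext
    show p ::ₘ π.parts.erase p = π.parts
    exact Multiset.cons_erase hπ.2
  · intro π' hπ'
    apply Nat.Partition.ext
    show (p ::ₘ π'.parts).erase p = π'.parts
    exact Multiset.erase_cons_head p π'.parts
  · intro π hπ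
    simp only [Finset.mem_filter, Finset.mem_univ, true_and] at hπ
    exact wgt_erase hpn π hπ.2
end
section
open Finset

lemma S_rec (n l : ℕ) :
    ((l : ℚ) + 1) * S n (l + 1)
      = ∑ p ∈ Finset.Icc 1 n, ((2 * p).factorial : ℚ)⁻¹ * S (n - p) l := by
  rw [S, Finset.mul_sum]
  have hstep : ∀ π ∈ Finset.univ.filter
      (fun π : Nat.Partition n => Multiset.card π.parts = l + 1),
      ((l : ℚ) + 1) * wgt n π
        = ∑ p ∈ Finset.Icc 1 n, (Multiset.count p π.parts : ℚ) * wgt n π := by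
    intro π hπ
    simp only [Finset.mem_filter, Finset.mem_univ, true_and] at hπ
    have h1 : ((l : ℚ) + 1) = ((Multiset.card π.parts : ℕ) : ℚ) := by
      rw [hπ]; push_cast; ring
    rw [h1, card_parts_eq_sum π, Nat.cast_sum, Finset.sum_mul]
  rw [Finset.sum_congr rfl hstep, Finset.sum_comm]
  exact Finset.sum_congr rfl fun p hp =>
    key_lemma n l p (Finset.mem_Icc.mp hp).1 (Finset.mem_Icc.mp hp).2

lemma S_zero (n : ℕ) : S n 0 = if n = 0 then 1 else 0 := by
  rcases n with _ | n
  · rw [if_pos rfl, S]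
    have hall : ∀ π : Nat.Partition 0, π.parts = 0 := by
      intro π
      apply Multiset.eq_zero_of_forall_notMem
      intro x hx
      have h1 := π.parts_pos hx
      have h2 := part_le π hx
      omega
    have hfil : Finset.univ.filter
        (fun π : Nat.Partition 0 => Multiset.card π.parts = 0) = Finset.univ := by
      apply Finset.filter_true_of_mem
      intro π _
      rw [hall π]
      rfl
    rw [hfil]
    have hw : ∀ π : Nat.Partition 0, wgt 0 π = 1 := by
      intro π
      rw [wgt]
      simp
    rw [Finset.sum_congr rfl (fun π _ => hw π), Finset.sum_const, Finset.card_univ]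
    have hcard : Fintype.card (Nat.Partition 0) = 1 := by
      rw [Fintype.card_eq_one_iff]
      refine ⟨⟨0, by simp, by simp⟩, fun y => Nat.Partition.ext ?_⟩
      rw [hall y]
    rw [hcard]
    simp
  · rw [if_neg (Nat.succ_ne_zero n), S]
    rw [Finset.filter_false_of_mem, Finset.sum_empty]
    intro π _
    intro hcard
    have : π.parts = 0 := Multiset.card_eq_zero.mp hcard
    have h2 := π.parts_sum
    rw [this] at h2
    simp at h2

lemma S_eq_EE : ∀ l n : ℕ, S n l = EE n l := by
  intro l
  induction l with
  | zero =>
    intro n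
    rw [S_zero, EE]
  | succ l ih =>
    intro n
    have h1 : ((l : ℚ) + 1) ≠ 0 := by positivity
    apply mul_left_cancel₀ h1
    rw [EE, ← mul_assoc, mul_inv_cancel₀ h1, one_mul, S_rec]
    refine Finset.sum_bij' (fun p _ => n - p) (fun a _ => n - a) ?_ ?_ ?_ ?_ ?_
    · intro p hp
      simp only [Finset.mem_Icc, Finset.mem_range] at hp ⊢
      omega
    · intro a ha
      simp only [Finset.mem_Icc, Finset.mem_range] at ha ⊢
      omega
    · intro p hp
      simp only [Finset.mem_Icc] at hp
      show n - (n - p) = p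
      omega
    · intro a ha
      simp only [Finset.mem_range] at ha
      show n - (n - a) = a
      omega
    · intro p hp
      simp only [Finset.mem_Icc] at hp
      rw [show n - (n - p) = p by omega, ih]
end

/-- `φ(n, n-λ, 0) = ∑_{π ∈ 𝒫_{n,λ}} (∏_{k=1}^{n} π(k)!·((2k)!)^{π(k)})⁻¹` for `n ≥ λ ≥ 0`,
where `𝒫_{n,λ}` is the set of partitions of `n` with `λ` parts and `π(k)` is the
frequency (multiplicity) of the part `k` in `π`. -/
theorem stmt17 (n l : ℕ) (hl : l ≤ n) :
    phi (n : ℤ) ((n : ℤ) - (l : ℤ)) 0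
      = ∑ π ∈ Finset.univ.filter (fun π : Nat.Partition n => Multiset.card π.parts = l),
          (∏ k ∈ Finset.Icc 1 n,
            (Nat.factorial (Multiset.count k π.parts) : ℚ)
              * (Nat.factorial (2 * k) : ℚ) ^ (Multiset.count k π.parts))⁻¹ := by
  rw [phi, if_pos ⟨Int.ofNat_nonneg n, by omega, le_refl 0⟩]
  rw [show ((n : ℤ)).toNat = n from Int.toNat_natCast n,
    show ((n : ℤ) - (l : ℤ)).toNat = n - l by omega,
    show ((0 : ℤ)).toNat = 0 from rfl]
  rw [phiN_eq, if_pos ⟨Nat.zero_le _, Nat.sub_le n l⟩, show n - (n - l) = l by omega,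
    AA_k0, ← S_eq_EE]
  rfl
end

section
/- Define F : ℂ × ℂ × ℂ → ℂ by F(x,y,z) = exp( y · Σ_{k=1}^{∞} f_k(z) · x^k ), where f_k(z) := (1/(2k)!)·(1 + z/(2k+1)); the series converges for all complex x, z. Then F satisfies, for all complex x, y, z, the linear partial differential equation 2x·∂F/∂x + z(z+1)·∂F/∂z − z·y·∂F/∂y = y·x·F + x·∂F/∂z, together with the boundary condition F(0,0,0) = 1. -/
/-- The component functions `f_k(z) = (1/(2k)!)·(1 + z/(2k+1))`, here over ℂ. -/
noncomputable def f (k : ℕ) (z : ℂ) : ℂ :=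
  (1 / (Nat.factorial (2 * k) : ℂ)) * (1 + z / (2 * (k : ℂ) + 1))

/-- `F(x,y,z) = exp(y · ∑_{k≥1} f_k(z)·x^k)`. -/
noncomputable def F (x y z : ℂ) : ℂ :=
  Complex.exp (y * ∑' k : ℕ, f (k + 1) z * x ^ (k + 1))

noncomputable def aa (k : ℕ) : ℂ := 1 / ((2 * k + 2).factorial : ℂ)
noncomputable def bb (k : ℕ) : ℂ := 1 / ((2 * k + 3).factorial : ℂ)

lemma f_eq (k : ℕ) (z : ℂ) : f (k + 1) z = aa k + z * bb k := by
  unfold f aa bb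
  have h1 : 2 * (k + 1) = 2 * k + 2 := by ring
  have h2 : ((2 * k + 3).factorial : ℂ) = (2 * (k:ℂ) + 3) * ((2 * k + 2).factorial : ℂ) := by
    rw [show (2*k+3).factorial = (2*k+3) * (2*k+2).factorial from Nat.factorial_succ (2*k+2)]
    push_cast; ring
  rw [h1, h2]
  have hne : ((2 * k + 2).factorial : ℂ) ≠ 0 := Nat.cast_ne_zero.mpr (Nat.factorial_ne_zero _)
  have hne2 : (2 * (k:ℂ) + 3) ≠ 0 := by
    have h : ((2*k+3 : ℕ) : ℂ) ≠ 0 := Nat.cast_ne_zero.mpr (by omega)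
    push_cast at h
    exact h
  have hne3 : (2 * ((k:ℂ) + 1) + 1) ≠ 0 := by
    have : (2 * ((k:ℂ) + 1) + 1) = 2 * (k:ℂ) + 3 := by ring
    rw [this]; exact hne2
  push_cast
  field_simp
  ring

lemma norm_one_div_factorial_le {n : ℕ} (h : k + 1 ≤ n) :
    ‖(1 / ((n).factorial : ℂ) : ℂ)‖ ≤ 1 / ((k+1).factorial : ℝ) := by
  rw [norm_div, norm_one, Complex.norm_natCast]
  apply one_div_le_one_div_of_le
  · exact_mod_cast (k+1).factorial_pos
  · exact_mod_cast Nat.factorial_le h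

lemma norm_aa (k : ℕ) : ‖aa k‖ ≤ 1 / ((k+1).factorial : ℝ) :=
  norm_one_div_factorial_le (by omega)

lemma norm_bb (k : ℕ) : ‖bb k‖ ≤ 1 / ((k+1).factorial : ℝ) :=
  norm_one_div_factorial_le (by omega)

lemma norm_f (z : ℂ) (k : ℕ) : ‖f (k+1) z‖ ≤ (1 + ‖z‖) / ((k+1).factorial : ℝ) := by
  rw [f_eq]
  calc ‖aa k + z * bb k‖ ≤ ‖aa k‖ + ‖z‖ * ‖bb k‖ := by
        refine le_trans (norm_add_le _ _) ?_
        rw [norm_mul]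
    _ ≤ 1 / ((k+1).factorial : ℝ) + ‖z‖ * (1 / ((k+1).factorial : ℝ)) := by
        gcongr
        · exact norm_aa k
        · exact norm_bb k
    _ = (1 + ‖z‖) / ((k+1).factorial : ℝ) := by ring

lemma aux_summable {c : ℕ → ℂ} {M : ℝ} (hc : ∀ k, ‖c k‖ ≤ M / (k + 1).factorial) (x : ℂ) :
    Summable (fun k : ℕ => c k * x ^ (k + 1)) := by
  refine Summable.of_norm_bounded
    ((Real.summable_pow_div_factorial ‖x‖).mul_left (M * ‖x‖)) fun k => ?_
  have h2 : (k.factorial : ℝ) ≤ ((k + 1).factorial : ℝ) := by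
    exact_mod_cast Nat.factorial_le (Nat.le_succ k)
  have hk : (0:ℝ) < k.factorial := by exact_mod_cast k.factorial_pos
  have hM : 0 ≤ M := le_trans (norm_nonneg (c 0)) (by simpa using hc 0)
  calc ‖c k * x ^ (k + 1)‖ = ‖c k‖ * ‖x‖ ^ (k + 1) := by rw [norm_mul, norm_pow]
    _ ≤ (M / (k + 1).factorial) * ‖x‖ ^ (k + 1) :=
        mul_le_mul_of_nonneg_right (hc k) (by positivity)
    _ ≤ (M / k.factorial) * ‖x‖ ^ (k + 1) := by
        apply mul_le_mul_of_nonneg_right _ (by positivity)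
        exact div_le_div_of_nonneg_left hM hk h2
    _ = (M * ‖x‖) * (‖x‖ ^ k / k.factorial) := by ring

lemma aux_summable' {c : ℕ → ℂ} {M : ℝ} (hc : ∀ k, ‖c k‖ ≤ M / (k + 1).factorial) (x : ℂ) :
    Summable (fun k : ℕ => ((k : ℂ) + 1) * c k * x ^ k) := by
  refine Summable.of_norm_bounded
    ((Real.summable_pow_div_factorial ‖x‖).mul_left M) fun k => ?_
  have hfs : ((k + 1).factorial : ℝ) = ((k:ℝ) + 1) * k.factorial := by
    rw [Nat.factorial_succ]; push_cast; ring
  have hk : (0:ℝ) < k.factorial := by exact_mod_cast k.factorial_pos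
  calc ‖((k : ℂ) + 1) * c k * x ^ k‖ = ((k:ℝ) + 1) * ‖c k‖ * ‖x‖ ^ k := by
        rw [norm_mul, norm_mul, norm_pow]
        congr 2
        simpa using Complex.norm_natCast (k + 1)
    _ ≤ ((k:ℝ) + 1) * (M / (k + 1).factorial) * ‖x‖ ^ k := by
        apply mul_le_mul_of_nonneg_right _ (by positivity)
        exact mul_le_mul_of_nonneg_left (hc k) (by positivity)
    _ = M * (‖x‖ ^ k / k.factorial) := by rw [hfs]; field_simp

lemma aux_hasDerivAt {c : ℕ → ℂ} {M : ℝ} (hc : ∀ k, ‖c k‖ ≤ M / (k + 1).factorial) (x : ℂ) :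
    HasDerivAt (fun x' : ℂ => ∑' k : ℕ, c k * x' ^ (k + 1))
      (∑' k : ℕ, ((k : ℂ) + 1) * c k * x ^ k) x := by
  have hM : 0 ≤ M := le_trans (norm_nonneg (c 0)) (by simpa using hc 0)
  have hu : Summable (fun k : ℕ => M * ((‖x‖ + 1) ^ k / k.factorial)) :=
    (Real.summable_pow_div_factorial (‖x‖ + 1)).mul_left M
  have hmem : x ∈ Metric.ball (0 : ℂ) (‖x‖ + 1) :=
    by simp [Metric.mem_ball]
  have hg : ∀ (n : ℕ) (y : ℂ), y ∈ Metric.ball (0 : ℂ) (‖x‖ + 1) →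
      HasDerivAt (fun x' : ℂ => c n * x' ^ (n + 1)) (((n : ℂ) + 1) * c n * y ^ n) y := by
    intro n y _
    have h := (hasDerivAt_pow (n + 1) y).const_mul (c n)
    refine h.congr_deriv ?_
    push_cast
    ring
  have hg' : ∀ (n : ℕ) (y : ℂ), y ∈ Metric.ball (0 : ℂ) (‖x‖ + 1) →
      ‖((n : ℂ) + 1) * c n * y ^ n‖ ≤ M * ((‖x‖ + 1) ^ n / n.factorial) := by
    intro n y hy
    have hyn : ‖y‖ ≤ ‖x‖ + 1 := by
      have := Metric.mem_ball.mp hy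
      rw [dist_zero_right] at this
      linarith
    have hfs : ((n + 1).factorial : ℝ) = ((n:ℝ) + 1) * n.factorial := by
      rw [Nat.factorial_succ]; push_cast; ring
    have hk : (0:ℝ) < n.factorial := by exact_mod_cast n.factorial_pos
    calc ‖((n : ℂ) + 1) * c n * y ^ n‖ = ((n:ℝ) + 1) * ‖c n‖ * ‖y‖ ^ n := by
          rw [norm_mul, norm_mul, norm_pow]
          congr 2
          simpa using Complex.norm_natCast (n + 1)
      _ ≤ ((n:ℝ) + 1) * (M / (n + 1).factorial) * (‖x‖ + 1) ^ n := by
          apply mul_le_mul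
          · exact mul_le_mul_of_nonneg_left (hc n) (by positivity)
          · exact pow_le_pow_left₀ (norm_nonneg y) hyn n
          · positivity
          · positivity
      _ = M * ((‖x‖ + 1) ^ n / n.factorial) := by rw [hfs]; field_simp
  exact hasDerivAt_tsum_of_isPreconnected hu Metric.isOpen_ball
    (convex_ball _ _).isPreconnected hg hg' hmem (aux_summable hc x) hmem

/-- The series `∑_{k≥1} f_k(z)·x^k` converges for all complex `x, z`, and
`F(x,y,z) = exp(y·∑_{k≥1} f_k(z)·x^k)` satisfies the linear partial differential equation
`2x·∂F/∂x + z(z+1)·∂F/∂z − z·y·∂F/∂y = y·x·F + x·∂F/∂z` with `F(0,0,0) = 1`. -/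
theorem stmt18 :
    (∀ x z : ℂ, Summable (fun k : ℕ => f (k + 1) z * x ^ (k + 1)))
      ∧ (∀ x y z : ℂ,
          2 * x * deriv (fun x' : ℂ => F x' y z) x
              + z * (z + 1) * deriv (fun z' : ℂ => F x y z') z
              - z * y * deriv (fun y' : ℂ => F x y' z) y
            = y * x * F x y z + x * deriv (fun z' : ℂ => F x y z') z)
      ∧ F 0 0 0 = 1 := by
  refine ⟨fun x z => aux_summable (norm_f z) x, fun x y z => ?_, by simp [F]⟩
  -- summabilities
  have sA := aux_summable norm_aa x
  have sB := aux_summable norm_bb x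
  have sA' := aux_summable' norm_aa x
  have sB' := aux_summable' norm_bb x
  set A : ℂ := ∑' k : ℕ, aa k * x ^ (k + 1) with hA
  set B : ℂ := ∑' k : ℕ, bb k * x ^ (k + 1) with hB
  set A' : ℂ := ∑' k : ℕ, ((k : ℂ) + 1) * aa k * x ^ k with hA'
  set B' : ℂ := ∑' k : ℕ, ((k : ℂ) + 1) * bb k * x ^ k with hB'
  -- splitting the sum
  have hS : ∀ z' x' : ℂ, (∑' k : ℕ, f (k + 1) z' * x' ^ (k + 1))
      = (∑' k : ℕ, aa k * x' ^ (k + 1)) + z' * ∑' k : ℕ, bb k * x' ^ (k + 1) := by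
    intro z' x'
    rw [← tsum_mul_left,
      ← Summable.tsum_add (aux_summable norm_aa x') ((aux_summable norm_bb x').mul_left z')]
    exact tsum_congr fun k => by rw [f_eq]; ring
  have hSx : (∑' k : ℕ, ((k : ℂ) + 1) * f (k + 1) z * x ^ k) = A' + z * B' := by
    rw [hA', hB', ← tsum_mul_left, ← Summable.tsum_add sA' (sB'.mul_left z)]
    exact tsum_congr fun k => by rw [f_eq]; ring
  -- derivatives
  have hE : F x y z = Complex.exp (y * (A + z * B)) := by
    rw [F, hS z x]
  have hDx : deriv (fun x' : ℂ => F x' y z) x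
      = Complex.exp (y * (A + z * B)) * (y * (A' + z * B')) := by
    have h2 := ((aux_hasDerivAt (norm_f z) x).const_mul y).cexp
    simp only [F]
    rw [h2.deriv, hSx, hS z x]
  have hDy : deriv (fun y' : ℂ => F x y' z) y
      = Complex.exp (y * (A + z * B)) * (A + z * B) := by
    have h2 := ((hasDerivAt_mul_const (∑' k : ℕ, f (k + 1) z * x ^ (k + 1))).cexp
      (x := y)).deriv
    simp only [F]
    rw [h2, hS z x]
  have hDz : deriv (fun z' : ℂ => F x y z') z
      = Complex.exp (y * (A + z * B)) * (y * B) := by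
    have hfun : (fun z' : ℂ => F x y z')
        = fun z' : ℂ => Complex.exp (y * (A + z' * B)) := by
      funext z'
      rw [F, hS z' x]
    rw [hfun]
    exact ((((hasDerivAt_mul_const B).const_add A).const_mul y).cexp (x := z)).deriv
  -- the two series identities
  have hfac2 : ∀ k : ℕ, ((2 * k + 2).factorial : ℂ)
      = (2 * (k:ℂ) + 2) * ((2 * k + 1).factorial : ℂ) := by
    intro k
    rw [show (2*k+2).factorial = (2*k+2) * (2*k+1).factorial from Nat.factorial_succ (2*k+1)]
    push_cast; ring
  have hfac3 : ∀ k : ℕ, ((2 * k + 3).factorial : ℂ)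
      = (2 * (k:ℂ) + 3) * ((2 * k + 2).factorial : ℂ) := by
    intro k
    rw [show (2*k+3).factorial = (2*k+3) * (2*k+2).factorial from Nat.factorial_succ (2*k+2)]
    push_cast; ring
  have hne : ∀ n : ℕ, ((n.factorial : ℂ)) ≠ 0 :=
    fun n => Nat.cast_ne_zero.mpr (Nat.factorial_ne_zero n)
  have hnat : ∀ n : ℕ, ((n : ℂ) + 1) ≠ 0 := by
    intro n
    have h : ((n + 1 : ℕ) : ℂ) ≠ 0 := Nat.cast_ne_zero.mpr (by omega)
    push_cast at h; exact h
  -- identity I : 2x A' = x + x B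
  have sd : Summable (fun k : ℕ => (1 / ((2 * k + 1).factorial : ℂ)) * x ^ (k + 1)) :=
    aux_summable (c := fun k => 1 / ((2 * k + 1).factorial : ℂ)) (M := 1)
      (fun k => by simpa using norm_one_div_factorial_le (k := k) (by omega)) x
  have hI : 2 * x * A' = x + x * B := by
    have e1 : 2 * x * A' = ∑' k : ℕ, (1 / ((2 * k + 1).factorial : ℂ)) * x ^ (k + 1) := by
      rw [hA', ← tsum_mul_left]
      refine tsum_congr fun k => ?_
      unfold aa
      rw [hfac2 k]
      have h1 := hne (2 * k + 1)
      have h2 : (2 * (k:ℂ) + 2) ≠ 0 := by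
        have := hnat (2 * k + 1); push_cast at this
        intro h; apply this; linear_combination h
      field_simp
      ring
    rw [e1, Summable.tsum_eq_zero_add sd]
    congr 1
    · norm_num
    · rw [← tsum_mul_left]
      refine tsum_congr fun k => ?_
      unfold bb
      have : 2 * (k + 1) + 1 = 2 * k + 3 := by ring
      rw [this]
      ring
  -- identity II : 2x B' + B = A
  have hII : 2 * x * B' + B = A := by
    rw [hB', hB, hA, ← tsum_mul_left, ← Summable.tsum_add (sB'.mul_left (2 * x)) sB]
    refine tsum_congr fun k => ?_
    unfold aa bb
    rw [hfac3 k]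
    have h1 := hne (2 * k + 2)
    have h2 : (2 * (k:ℂ) + 3) ≠ 0 := by
      have := hnat (2 * k + 2); push_cast at this
      intro h; apply this; linear_combination h
    field_simp
    ring
  rw [hDx, hDy, hDz, hE]
  linear_combination (y * Complex.exp (y * (A + z * B))) * hI
    + (y * Complex.exp (y * (A + z * B)) * z) * hII
end
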